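/- arXiv:2302.09704 — 2 statements merged into one kernel-verified Lean document; each statement's English description precedes it below -/
import Mathlib

section
/- Ellipsoid collision certificate: let A = {x : ⟪x, P⁻¹x⟫ ≤ 1} and B = {x : ⟪x, Q⁻¹x⟫ ≤ 1} with P, Q symmetric positive definite, let R, S be linear isometries and p, d ∈ ℝⁿ, and γ ∈ ℝ. Then sd(R·A + p, S·B + d) ≥ γ if and only if there exists c ∈ ℝⁿ with ‖c‖ = 1 and γ ≤ −√(⟪c, R P Rᵀ c⟫) − √(⟪c, S Q Sᵀ c⟫) + ⟪c, p − d⟫. -/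
open scoped RealInnerProductSpace Pointwise

noncomputable def costFn {n : ℕ} (C : Set (EuclideanSpace ℝ (Fin n)))
    (c : EuclideanSpace ℝ (Fin n)) : ℝ :=
  sInf ((fun x => ⟪c, x⟫) '' C)

noncomputable def suppFn {n : ℕ} (T : Set (EuclideanSpace ℝ (Fin n)))
    (c : EuclideanSpace ℝ (Fin n)) : ℝ :=
  sSup ((fun x => ⟪c, x⟫) '' T)

open Classical in
noncomputable def sd {n : ℕ} (C D : Set (EuclideanSpace ℝ (Fin n))) : ℝ :=
  if Disjoint C D then sInf {r | ∃ x ∈ C, ∃ y ∈ D, r = ‖x - y‖}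
  else - sInf {r | ∃ t : EuclideanSpace ℝ (Fin n), ‖t‖ = r ∧ Disjoint ((· + t) '' C) D}

open scoped MatrixOrder in
noncomputable def Matrix.PosSemidef.sqrt {n : ℕ} {A : Matrix (Fin n) (Fin n) ℝ}
    (_hA : A.PosSemidef) : Matrix (Fin n) (Fin n) ℝ :=
  CFC.sqrt A

open scoped MatrixOrder in
lemma Matrix.PosSemidef.posSemidef_sqrt {n : ℕ} {A : Matrix (Fin n) (Fin n) ℝ}
    (hA : A.PosSemidef) : hA.sqrt.PosSemidef :=
  Matrix.nonneg_iff_posSemidef.1 (CFC.sqrt_nonneg A)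

open scoped MatrixOrder in
lemma Matrix.PosSemidef.sqrt_mul_self {n : ℕ} {A : Matrix (Fin n) (Fin n) ℝ}
    (hA : A.PosSemidef) : hA.sqrt * hA.sqrt = A :=
  CFC.sqrt_mul_sqrt_self A hA.nonneg

open scoped Matrix

section Aux
variable {n : ℕ}

lemma inner_toEucl (M : Matrix (Fin n) (Fin n) ℝ) (x y : EuclideanSpace ℝ (Fin n)) :
    ⟪x, Matrix.toEuclideanLin M y⟫ = dotProduct x (M.mulVec y) := by
  simp [Matrix.toEuclideanLin_apply]
  rw [EuclideanSpace.inner_eq_star_dotProduct, star_trivial]; exact dotProduct_comm _ _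

lemma adjEucl (M : Matrix (Fin n) (Fin n) ℝ) (x y : EuclideanSpace ℝ (Fin n)) :
    ⟪x, Matrix.toEuclideanLin M y⟫ = ⟪Matrix.toEuclideanLin Mᵀ x, y⟫ := by
  rw [inner_toEucl, real_inner_comm, inner_toEucl, Matrix.dotProduct_mulVec,
    dotProduct_comm, ← Matrix.mulVec_transpose]

lemma mulmulEucl (A B : Matrix (Fin n) (Fin n) ℝ) (x : EuclideanSpace ℝ (Fin n)) :
    Matrix.toEuclideanLin (A * B) x = Matrix.toEuclideanLin A (Matrix.toEuclideanLin B x) := by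
  simp [Matrix.toEuclideanLin_apply]

section Ell
variable {P : Matrix (Fin n) (Fin n) ℝ}

-- basic facts about the sqrt
lemma sqrt_sym (hP : P.PosDef) : hP.posSemidef.sqrt ᵀ = hP.posSemidef.sqrt := by
  have h := hP.posSemidef.posSemidef_sqrt.1
  rw [Matrix.IsHermitian, Matrix.conjTranspose_eq_transpose_of_trivial] at h
  exact h

lemma sqrt_det_unit (hP : P.PosDef) : IsUnit hP.posSemidef.sqrt.det := by
  have h : hP.posSemidef.sqrt.det * hP.posSemidef.sqrt.det = P.det := by
    rw [← Matrix.det_mul, hP.posSemidef.sqrt_mul_self]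
  have := hP.det_pos
  refine isUnit_iff_ne_zero.2 fun h0 => ?_
  rw [h0, mul_zero] at h; rw [← h] at this; exact (lt_irrefl 0 this).elim

lemma sqrt_inv_cancel (hP : P.PosDef) (x : EuclideanSpace ℝ (Fin n)) :
    Matrix.toEuclideanLin hP.posSemidef.sqrt (Matrix.toEuclideanLin hP.posSemidef.sqrt⁻¹ x) = x := by
  rw [← mulmulEucl, Matrix.mul_nonsing_inv _ (sqrt_det_unit hP)]
  simp [Matrix.toEuclideanLin_apply]

lemma sqrt_inv_cancel' (hP : P.PosDef) (x : EuclideanSpace ℝ (Fin n)) :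
    Matrix.toEuclideanLin hP.posSemidef.sqrt⁻¹ (Matrix.toEuclideanLin hP.posSemidef.sqrt x) = x := by
  rw [← mulmulEucl, Matrix.nonsing_inv_mul _ (sqrt_det_unit hP)]
  simp [Matrix.toEuclideanLin_apply]

lemma ell_norm (hP : P.PosDef) (x : EuclideanSpace ℝ (Fin n)) :
    ⟪x, Matrix.toEuclideanLin P⁻¹ x⟫ = ‖Matrix.toEuclideanLin hP.posSemidef.sqrt⁻¹ x‖ ^ 2 := by
  have h1 : P⁻¹ = hP.posSemidef.sqrt⁻¹ * hP.posSemidef.sqrt⁻¹ := by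
    rw [← Matrix.mul_inv_rev, hP.posSemidef.sqrt_mul_self]
  rw [h1, mulmulEucl, adjEucl, Matrix.transpose_nonsing_inv, sqrt_sym hP,
    real_inner_self_eq_norm_sq]

end Ell

section Ell
variable {P : Matrix (Fin n) (Fin n) ℝ}

lemma inner_sqrt_sq (hP : P.PosDef) (c : EuclideanSpace ℝ (Fin n)) :
    ⟪c, Matrix.toEuclideanLin P c⟫ = ‖Matrix.toEuclideanLin hP.posSemidef.sqrt c‖ ^ 2 := by
  conv_lhs => rw [← hP.posSemidef.sqrt_mul_self, mulmulEucl, adjEucl, sqrt_sym hP]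
  exact real_inner_self_eq_norm_sq _

lemma ell_zero_mem (hP : P.PosDef) :
    (0 : EuclideanSpace ℝ (Fin n)) ∈ {x : EuclideanSpace ℝ (Fin n) | ⟪x, Matrix.toEuclideanLin P⁻¹ x⟫ ≤ 1} := by
  simp [Set.mem_setOf_eq, inner_zero_left]

lemma ell_eq_image (hP : P.PosDef) :
    {x : EuclideanSpace ℝ (Fin n) | ⟪x, Matrix.toEuclideanLin P⁻¹ x⟫ ≤ 1}
      = (Matrix.toEuclideanLin hP.posSemidef.sqrt) '' Metric.closedBall 0 1 := by
  ext x
  simp only [Set.mem_setOf_eq, Set.mem_image, Metric.mem_closedBall, dist_zero_right]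
  constructor
  · intro hx
    refine ⟨Matrix.toEuclideanLin hP.posSemidef.sqrt⁻¹ x, ?_, sqrt_inv_cancel hP x⟩
    have := (ell_norm hP x) ▸ hx
    nlinarith [norm_nonneg (Matrix.toEuclideanLin hP.posSemidef.sqrt⁻¹ x)]
  · rintro ⟨u, hu, rfl⟩
    rw [ell_norm hP, sqrt_inv_cancel' hP]
    nlinarith [norm_nonneg u]

lemma ell_compact (hP : P.PosDef) :
    IsCompact {x : EuclideanSpace ℝ (Fin n) | ⟪x, Matrix.toEuclideanLin P⁻¹ x⟫ ≤ 1} := by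
  rw [ell_eq_image hP]
  exact (isCompact_closedBall 0 1).image
    (LinearMap.continuous_of_finiteDimensional (Matrix.toEuclideanLin hP.posSemidef.sqrt))

lemma ell_convex (hP : P.PosDef) :
    Convex ℝ {x : EuclideanSpace ℝ (Fin n) | ⟪x, Matrix.toEuclideanLin P⁻¹ x⟫ ≤ 1} := by
  rw [ell_eq_image hP]
  exact (convex_closedBall (0 : EuclideanSpace ℝ (Fin n)) 1).linear_image _

lemma ell_isGreatest (hP : P.PosDef) (c : EuclideanSpace ℝ (Fin n)) :
    IsGreatest ((fun x => ⟪c, x⟫) '' {x : EuclideanSpace ℝ (Fin n) | ⟪x, Matrix.toEuclideanLin P⁻¹ x⟫ ≤ 1})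
      (Real.sqrt ⟪c, Matrix.toEuclideanLin P c⟫) := by
  have hsq : Real.sqrt ⟪c, Matrix.toEuclideanLin P c⟫
      = ‖Matrix.toEuclideanLin hP.posSemidef.sqrt c‖ := by
    rw [inner_sqrt_sq hP, Real.sqrt_sq (norm_nonneg _)]
  set B := Matrix.toEuclideanLin hP.posSemidef.sqrt with hB
  constructor
  · rcases eq_or_ne (B c) 0 with h0 | h0
    · refine ⟨0, ell_zero_mem hP, ?_⟩
      show ⟪c, (0 : EuclideanSpace ℝ (Fin n))⟫ = _
      rw [inner_zero_right, hsq, h0, norm_zero]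
    · refine ⟨‖B c‖⁻¹ • B (B c), ?_, ?_⟩
      · rw [Set.mem_setOf_eq, ell_norm hP]
        rw [map_smul, sqrt_inv_cancel' hP]
        rw [norm_smul, norm_inv, norm_norm, inv_mul_cancel₀ (norm_ne_zero_iff.2 h0)]
        norm_num
      · show ⟪c, ‖B c‖⁻¹ • B (B c)⟫ = _
        rw [real_inner_smul_right, adjEucl, sqrt_sym hP, ← hB, real_inner_self_eq_norm_sq,
          hsq]
        field_simp [pow_two]
  · rintro r ⟨x, hx, rfl⟩
    have hx' : ‖Matrix.toEuclideanLin hP.posSemidef.sqrt⁻¹ x‖ ≤ 1 := by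
      have hx2 : ⟪x, Matrix.toEuclideanLin P⁻¹ x⟫ ≤ 1 := hx
      rw [ell_norm hP] at hx2
      nlinarith [norm_nonneg (Matrix.toEuclideanLin hP.posSemidef.sqrt⁻¹ x)]
    calc ⟪c, x⟫ = ⟪B c, Matrix.toEuclideanLin hP.posSemidef.sqrt⁻¹ x⟫ := by
          conv_lhs => rw [← sqrt_inv_cancel hP x]
          rw [adjEucl, sqrt_sym hP]
      _ ≤ ‖B c‖ * ‖Matrix.toEuclideanLin hP.posSemidef.sqrt⁻¹ x‖ := real_inner_le_norm _ _
      _ ≤ ‖B c‖ * 1 := by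
          exact mul_le_mul_of_nonneg_left hx' (norm_nonneg _)
      _ = Real.sqrt ⟪c, Matrix.toEuclideanLin P c⟫ := by rw [mul_one, hsq]

lemma ell_neg_mem (hP : P.PosDef) {x : EuclideanSpace ℝ (Fin n)}
    (hx : x ∈ {x : EuclideanSpace ℝ (Fin n) | ⟪x, Matrix.toEuclideanLin P⁻¹ x⟫ ≤ 1}) :
    -x ∈ {x : EuclideanSpace ℝ (Fin n) | ⟪x, Matrix.toEuclideanLin P⁻¹ x⟫ ≤ 1} := by
  simp only [Set.mem_setOf_eq] at *
  rwa [map_neg, inner_neg_neg]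

lemma ell_isLeast (hP : P.PosDef) (c : EuclideanSpace ℝ (Fin n)) :
    IsLeast ((fun x => ⟪c, x⟫) '' {x : EuclideanSpace ℝ (Fin n) | ⟪x, Matrix.toEuclideanLin P⁻¹ x⟫ ≤ 1})
      (- Real.sqrt ⟪c, Matrix.toEuclideanLin P c⟫) := by
  obtain ⟨⟨xm, hxm, hxv⟩, hub⟩ := ell_isGreatest hP c
  constructor
  · exact ⟨-xm, ell_neg_mem hP hxm, by simpa [inner_neg_right] using congrArg Neg.neg hxv⟩
  · rintro r ⟨x, hx, rfl⟩
    have := hub ⟨-x, ell_neg_mem hP hx, rfl⟩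
    simp only [inner_neg_right] at this
    linarith
end Ell

section Abstract
variable {C D : Set (EuclideanSpace ℝ (Fin n))} {c : EuclideanSpace ℝ (Fin n)}

lemma img_compact (hC : IsCompact C) (c : EuclideanSpace ℝ (Fin n)) :
    IsCompact ((fun x => ⟪c, x⟫) '' C) :=
  hC.image (continuous_const.inner continuous_id)

lemma costFn_le (hC : IsCompact C) {x : EuclideanSpace ℝ (Fin n)} (hx : x ∈ C) :
    costFn C c ≤ ⟪c, x⟫ :=
  csInf_le (img_compact hC c).bddBelow ⟨x, hx, rfl⟩

lemma le_suppFn (hD : IsCompact D) {y : EuclideanSpace ℝ (Fin n)} (hy : y ∈ D) :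
    ⟪c, y⟫ ≤ suppFn D c :=
  le_csSup (img_compact hD c).bddAbove ⟨y, hy, rfl⟩

lemma le_costFn (hC : C.Nonempty) {m : ℝ} (h : ∀ x ∈ C, m ≤ ⟪c, x⟫) : m ≤ costFn C c :=
  le_csInf (hC.image _) (by rintro r ⟨x, hx, rfl⟩; exact h x hx)

lemma suppFn_le (hD : D.Nonempty) {m : ℝ} (h : ∀ y ∈ D, ⟪c, y⟫ ≤ m) : suppFn D c ≤ m :=
  csSup_le (hD.image _) (by rintro r ⟨y, hy, rfl⟩; exact h y hy)

end Abstract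

section Abstract2
variable {C D : Set (EuclideanSpace ℝ (Fin n))} {c : EuclideanSpace ℝ (Fin n)}

lemma mem_sep_set' (hC : IsCompact C) (hD : IsCompact D) (hc : ‖c‖ = 1) {s : ℝ} (hs : 0 ≤ s)
    (h : suppFn D c - costFn C c < s) :
    ∃ t : EuclideanSpace ℝ (Fin n), ‖t‖ = s ∧ Disjoint ((· + t) '' C) D := by
  refine ⟨s • c, by rw [norm_smul, hc, mul_one, Real.norm_eq_abs, abs_of_nonneg hs], ?_⟩
  rw [Set.disjoint_left]
  rintro z ⟨x, hx, rfl⟩ hzD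
  have h1 : costFn C c ≤ ⟪c, x⟫ := costFn_le hC hx
  have h2 : ⟪c, x + s • c⟫ ≤ suppFn D c := le_suppFn hD hzD
  rw [inner_add_right, real_inner_smul_right, real_inner_self_eq_norm_sq, hc, one_pow,
    mul_one] at h2
  linarith

lemma sep_bddBelow :
    BddBelow {r | ∃ t : EuclideanSpace ℝ (Fin n), ‖t‖ = r ∧ Disjoint ((· + t) '' C) D} :=
  ⟨0, by rintro r ⟨t, rfl, -⟩; exact norm_nonneg t⟩

/-- easy direction -/
lemma sd_ge_single (hC : IsCompact C) (hCne : C.Nonempty) (hD : IsCompact D) (hDne : D.Nonempty)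
    (hc : ‖c‖ = 1) : costFn C c - suppFn D c ≤ sd C D := by
  unfold sd
  split_ifs with hdis
  · obtain ⟨x₀, hx₀⟩ := hCne
    obtain ⟨y₀, hy₀⟩ := hDne
    refine le_csInf ⟨‖x₀ - y₀‖, x₀, hx₀, y₀, hy₀, rfl⟩ ?_
    rintro r ⟨x, hx, y, hy, rfl⟩
    have h1 : costFn C c ≤ ⟪c, x⟫ := costFn_le hC hx
    have h2 : ⟪c, y⟫ ≤ suppFn D c := le_suppFn hD hy
    have h3 : ⟪c, x - y⟫ ≤ ‖x - y‖ := by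
      calc ⟪c, x - y⟫ ≤ ‖c‖ * ‖x - y‖ := real_inner_le_norm _ _
        _ = ‖x - y‖ := by rw [hc, one_mul]
    rw [inner_sub_right] at h3
    linarith
  · have hg0 : 0 ≤ suppFn D c - costFn C c := by
      rw [Set.not_disjoint_iff] at hdis
      obtain ⟨z, hzC, hzD⟩ := hdis
      have := costFn_le (c := c) hC hzC
      have := le_suppFn (c := c) hD hzD
      linarith
    have key : sInf {r | ∃ t : EuclideanSpace ℝ (Fin n), ‖t‖ = r ∧ Disjoint ((· + t) '' C) D}
        ≤ suppFn D c - costFn C c := by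
      by_contra hlt
      push_neg at hlt
      have hmem := mem_sep_set' hC hD hc
        (s := (suppFn D c - costFn C c
          + sInf {r | ∃ t : EuclideanSpace ℝ (Fin n), ‖t‖ = r ∧ Disjoint ((· + t) '' C) D}) / 2)
        (by linarith) (by linarith)
      have := csInf_le sep_bddBelow hmem
      linarith
    linarith

end Abstract2

section Aux2
variable {n : ℕ} {C D : Set (EuclideanSpace ℝ (Fin n))}

lemma suppFn_continuous (hD : IsCompact D) (hDne : D.Nonempty) :
    Continuous (suppFn D) := by
  obtain ⟨M, hM⟩ := hD.isBounded.exists_norm_le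
  have hM0 : 0 ≤ M := le_trans (norm_nonneg _) (hM _ hDne.choose_spec)
  have one_sided : ∀ a b : EuclideanSpace ℝ (Fin n), suppFn D a ≤ suppFn D b + M * ‖a - b‖ := by
    intro a b
    refine suppFn_le hDne fun y hy => ?_
    have h1 : ⟪a, y⟫ = ⟪b, y⟫ + ⟪a - b, y⟫ := by rw [inner_sub_left]; ring
    have h2 : ⟪b, y⟫ ≤ suppFn D b := le_suppFn hD hy
    have h3 : ⟪a - b, y⟫ ≤ ‖a - b‖ * ‖y‖ := real_inner_le_norm _ _
    have h4 : ‖a - b‖ * ‖y‖ ≤ ‖a - b‖ * M :=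
      mul_le_mul_of_nonneg_left (hM y hy) (norm_nonneg _)
    nlinarith
  refine (LipschitzWith.of_dist_le_mul (K := Real.toNNReal M) fun a b => ?_).continuous
  rw [Real.dist_eq, abs_sub_le_iff, Real.coe_toNNReal M hM0, dist_eq_norm]
  constructor
  · have := one_sided a b; linarith
  · have := one_sided b a
    rw [(neg_sub a b).symm, norm_neg] at this; linarith

lemma costFn_continuous (hC : IsCompact C) (hCne : C.Nonempty) :
    Continuous (costFn C) := by
  obtain ⟨M, hM⟩ := hC.isBounded.exists_norm_le
  have hM0 : 0 ≤ M := le_trans (norm_nonneg _) (hM _ hCne.choose_spec)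
  have one_sided : ∀ a b : EuclideanSpace ℝ (Fin n), costFn C b - M * ‖a - b‖ ≤ costFn C a := by
    intro a b
    refine le_costFn hCne fun x hx => ?_
    have h1 : ⟪a, x⟫ = ⟪b, x⟫ - ⟪b - a, x⟫ := by rw [inner_sub_left]; ring
    have h2 : costFn C b ≤ ⟪b, x⟫ := costFn_le hC hx
    have h3 : ⟪b - a, x⟫ ≤ ‖b - a‖ * ‖x‖ := real_inner_le_norm _ _
    have h4 : ‖b - a‖ * ‖x‖ ≤ ‖b - a‖ * M :=
      mul_le_mul_of_nonneg_left (hM x hx) (norm_nonneg _)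
    have h5 : ‖b - a‖ = ‖a - b‖ := by rw [(neg_sub a b).symm, norm_neg]
    nlinarith
  refine (LipschitzWith.of_dist_le_mul (K := Real.toNNReal M) fun a b => ?_).continuous
  rw [Real.dist_eq, abs_sub_le_iff, Real.coe_toNNReal M hM0, dist_eq_norm]
  constructor
  · have := one_sided b a
    rw [(neg_sub a b).symm, norm_neg] at this; linarith
  · have := one_sided a b; linarith


/-- hard direction -/
lemma exists_opt (hn : 0 < n) (hC : IsCompact C) (hCcv : Convex ℝ C) (hCne : C.Nonempty)
    (hD : IsCompact D) (hDcv : Convex ℝ D) (hDne : D.Nonempty) :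
    ∃ c : EuclideanSpace ℝ (Fin n), ‖c‖ = 1 ∧ sd C D ≤ costFn C c - suppFn D c := by
  by_cases hdis : Disjoint C D
  · -- nearest points
    obtain ⟨⟨x₀, y₀⟩, hmem, hmin⟩ := (hC.prod hD).exists_isMinOn (hCne.prod hDne)
      ((continuous_fst.sub continuous_snd).norm).continuousOn
    obtain ⟨hx₀, hy₀⟩ := hmem
    rw [isMinOn_iff] at hmin
    have hminD : ∀ w ∈ D, ‖x₀ - y₀‖ ≤ ‖x₀ - w‖ := fun w hw =>
      hmin (x₀, w) (Set.mk_mem_prod hx₀ hw)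
    have hminC : ∀ w ∈ C, ‖x₀ - y₀‖ ≤ ‖w - y₀‖ := fun w hw =>
      hmin (w, y₀) (Set.mk_mem_prod hw hy₀)
    have hne : x₀ ≠ y₀ := fun h => Set.disjoint_left.1 hdis hx₀ (h ▸ hy₀)
    have hδpos : (0:ℝ) < ‖x₀ - y₀‖ := by
      rw [norm_pos_iff]; exact sub_ne_zero.2 hne
    set δ := ‖x₀ - y₀‖ with hδ
    refine ⟨δ⁻¹ • (x₀ - y₀), ?_, ?_⟩
    · rw [norm_smul, norm_inv, Real.norm_eq_abs, abs_of_pos hδpos, inv_mul_cancel₀ hδpos.ne']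
    set c := δ⁻¹ • (x₀ - y₀) with hc
    -- nearest point characterizations
    haveI : Nonempty ↥D := ⟨⟨y₀, hy₀⟩⟩
    haveI : Nonempty ↥C := ⟨⟨x₀, hx₀⟩⟩
    have hbD : BddBelow (Set.range fun w : D => ‖x₀ - (w : EuclideanSpace ℝ (Fin n))‖) :=
      ⟨0, by rintro r ⟨w, rfl⟩; exact norm_nonneg _⟩
    have hbC : BddBelow (Set.range fun w : C => ‖y₀ - (w : EuclideanSpace ℝ (Fin n))‖) :=
      ⟨0, by rintro r ⟨w, rfl⟩; exact norm_nonneg _⟩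
    have hDproj : ∀ w ∈ D, ⟪x₀ - y₀, w - y₀⟫ ≤ 0 := by
      refine (norm_eq_iInf_iff_real_inner_le_zero hDcv hy₀).1 ?_
      exact le_antisymm (le_ciInf fun w => hminD w w.2) (ciInf_le hbD ⟨y₀, hy₀⟩)
    have hCproj : ∀ w ∈ C, ⟪y₀ - x₀, w - x₀⟫ ≤ 0 := by
      refine (norm_eq_iInf_iff_real_inner_le_zero hCcv hx₀).1 ?_
      refine le_antisymm (le_ciInf fun w => ?_) (ciInf_le hbC ⟨x₀, hx₀⟩)
      show ‖y₀ - x₀‖ ≤ ‖y₀ - (w : EuclideanSpace ℝ (Fin n))‖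
      rw [norm_sub_rev y₀ x₀, norm_sub_rev y₀ (w : EuclideanSpace ℝ (Fin n))]
      exact le_trans (le_of_eq hδ.symm) (hminC w w.2)
    have hcost : ⟪c, x₀⟫ ≤ costFn C c := by
      refine le_costFn hCne fun x hx => ?_
      have h1 : 0 ≤ ⟪x₀ - y₀, x - x₀⟫ := by
        have := hCproj x hx
        rw [show y₀ - x₀ = -(x₀ - y₀) by rw [neg_sub], inner_neg_left] at this
        linarith
      have h2 : ⟪c, x⟫ - ⟪c, x₀⟫ = δ⁻¹ * ⟪x₀ - y₀, x - x₀⟫ := by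
        rw [hc, real_inner_smul_left, real_inner_smul_left, ← mul_sub, ← inner_sub_right]
      have h3 : 0 ≤ δ⁻¹ * ⟪x₀ - y₀, x - x₀⟫ :=
        mul_nonneg (inv_nonneg.2 hδpos.le) h1
      linarith
    have hsupp : suppFn D c ≤ ⟪c, y₀⟫ := by
      refine suppFn_le hDne fun y hy => ?_
      have h1 : ⟪x₀ - y₀, y - y₀⟫ ≤ 0 := hDproj y hy
      have h2 : ⟪c, y⟫ - ⟪c, y₀⟫ = δ⁻¹ * ⟪x₀ - y₀, y - y₀⟫ := by
        rw [hc, real_inner_smul_left, real_inner_smul_left, ← mul_sub, ← inner_sub_right]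
      have h3 : δ⁻¹ * ⟪x₀ - y₀, y - y₀⟫ ≤ 0 :=
        mul_nonpos_of_nonneg_of_nonpos (inv_nonneg.2 hδpos.le) h1
      linarith
    have hval : ⟪c, x₀⟫ - ⟪c, y₀⟫ = δ := by
      rw [hc, real_inner_smul_left, real_inner_smul_left, ← mul_sub, ← inner_sub_right,
        real_inner_self_eq_norm_sq, ← hδ]
      field_simp [pow_two]
    have hsd : sd C D = δ := by
      rw [sd, if_pos hdis]
      refine le_antisymm (csInf_le ⟨0, ?_⟩ ⟨x₀, hx₀, y₀, hy₀, rfl⟩) (le_csInf ⟨δ, x₀, hx₀, y₀, hy₀, rfl⟩ ?_)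
      · rintro r ⟨x, hx, y, hy, rfl⟩; exact norm_nonneg _
      · rintro r ⟨x, hx, y, hy, rfl⟩; exact hmin (x, y) (Set.mk_mem_prod hx hy)
    rw [hsd]; linarith
  · -- penetration case
    haveI hnt : Nontrivial (EuclideanSpace ℝ (Fin n)) := by
      have hne : EuclideanSpace.single (⟨0, hn⟩ : Fin n) (1:ℝ) ≠ 0 := by
        intro h
        have := congrArg norm h
        rw [EuclideanSpace.norm_single, norm_zero] at this
        norm_num at this
      exact nontrivial_of_ne _ _ hne
    -- min of g on sphere
    have gcont : Continuous (fun e => suppFn D e - costFn C e) :=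
      (suppFn_continuous hD hDne).sub (costFn_continuous hC hCne)
    obtain ⟨c₀, hc₀⟩ := NormedSpace.sphere_nonempty (x := (0:EuclideanSpace ℝ (Fin n))) (r := 1) |>.2 zero_le_one
    obtain ⟨cs, hcs, hcsmin⟩ := (isCompact_sphere (0:EuclideanSpace ℝ (Fin n)) 1).exists_isMinOn
      ⟨c₀, hc₀⟩ gcont.continuousOn
    have hcsu : ‖cs‖ = 1 := by rwa [mem_sphere_zero_iff_norm] at hcs
    refine ⟨cs, hcsu, ?_⟩
    obtain ⟨z, hzC, hzD⟩ := Set.not_disjoint_iff.1 hdis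
    have hgs0 : 0 ≤ suppFn D cs - costFn C cs := by
      have := costFn_le (c := cs) hC hzC
      have := le_suppFn (c := cs) hD hzD
      linarith
    -- D - C compact convex closed
    have hDCco : IsCompact (D - C) := by
      rw [← Set.sub_image_prod]
      exact (hD.prod hC).image (continuous_fst.sub continuous_snd)
    have hDCcv : Convex ℝ (D - C) := hDcv.sub hCcv
    -- every element of the separating set is ≥ min gap
    have hKlb : ∀ r ∈ {r | ∃ t : EuclideanSpace ℝ (Fin n), ‖t‖ = r ∧ Disjoint ((· + t) '' C) D},
        suppFn D cs - costFn C cs ≤ r := by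
      rintro r ⟨t, rfl, htd⟩
      by_contra hlt
      push_neg at hlt
      -- show t ∈ D - C
      have htDC : t ∈ D - C := by
        by_contra htn
        obtain ⟨f, u, hfa, hft⟩ := geometric_hahn_banach_closed_point hDCcv hDCco.isClosed htn
        set v := (InnerProductSpace.toDual ℝ (EuclideanSpace ℝ (Fin n))).symm f with hv
        have hvf : ∀ x, ⟪v, x⟫ = f x := fun x => InnerProductSpace.toDual_symm_apply
        have hDCne : (z - z : EuclideanSpace ℝ (Fin n)) ∈ D - C := Set.sub_mem_sub hzD hzC
        have hvne : v ≠ 0 := by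
          intro h0
          have h1 := hfa _ hDCne
          have h2 := hft
          rw [← hvf, h0, inner_zero_left] at h1 h2
          linarith
        have hvpos : (0:ℝ) < ‖v‖ := norm_pos_iff.2 hvne
        set cu := ‖v‖⁻¹ • v with hcu
        have hcuu : ‖cu‖ = 1 := by
          rw [hcu, norm_smul, norm_inv, Real.norm_eq_abs, abs_of_pos hvpos,
            inv_mul_cancel₀ hvpos.ne']
        -- supp and cost attained
        obtain ⟨ym, hym, hymmax⟩ := hD.exists_isMaxOn hDne
          ((continuous_const.inner continuous_id).continuousOn :
            ContinuousOn (fun y => ⟪cu, y⟫) D)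
        obtain ⟨xm, hxm, hxmmin⟩ := hC.exists_isMinOn hCne
          ((continuous_const.inner continuous_id).continuousOn :
            ContinuousOn (fun x => ⟪cu, x⟫) C)
        have hsupp_eq : suppFn D cu = ⟪cu, ym⟫ :=
          le_antisymm (suppFn_le hDne fun y hy => hymmax hy) (le_suppFn hD hym)
        have hcost_eq : costFn C cu = ⟪cu, xm⟫ :=
          le_antisymm (costFn_le hC hxm) (le_costFn hCne fun x hx => hxmmin hx)
        -- strict separation
        have hlt2 : ⟪cu, ym - xm⟫ < ⟪cu, t⟫ := by
          have h1 : f (ym - xm) < u := hfa _ (Set.sub_mem_sub hym hxm)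
          have h2 : u < f t := hft
          rw [hcu, real_inner_smul_left, real_inner_smul_left, hvf, hvf]
          exact mul_lt_mul_of_pos_left (by linarith) (inv_pos.2 hvpos)
        have h3 : ⟪cu, t⟫ ≤ ‖t‖ := by
          calc ⟪cu, t⟫ ≤ ‖cu‖ * ‖t‖ := real_inner_le_norm _ _
            _ = ‖t‖ := by rw [hcuu, one_mul]
        have h4 : suppFn D cs - costFn C cs ≤ suppFn D cu - costFn C cu :=
          hcsmin (mem_sphere_zero_iff_norm.2 hcuu)
        rw [hsupp_eq, hcost_eq] at h4
        rw [inner_sub_right] at hlt2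
        linarith
      obtain ⟨y, hy, x, hx, hyx⟩ := Set.mem_sub.1 htDC
      refine Set.disjoint_left.1 htd ⟨x, hx, ?_⟩ hy
      show x + t = y
      rw [← hyx]; abel
    have hKne : ∃ r, r ∈ {r | ∃ t : EuclideanSpace ℝ (Fin n), ‖t‖ = r ∧ Disjoint ((· + t) '' C) D} := by
      obtain ⟨t, ht, htd⟩ := mem_sep_set' hC hD hcsu
        (s := suppFn D cs - costFn C cs + 1) (by linarith) (by linarith)
      exact ⟨suppFn D cs - costFn C cs + 1, t, ht, htd⟩
    have hδge : suppFn D cs - costFn C cs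
        ≤ sInf {r | ∃ t : EuclideanSpace ℝ (Fin n), ‖t‖ = r ∧ Disjoint ((· + t) '' C) D} :=
      le_csInf hKne hKlb
    rw [sd, if_neg hdis]
    linarith

lemma inner_isom (R : EuclideanSpace ℝ (Fin n) ≃ₗᵢ[ℝ] EuclideanSpace ℝ (Fin n))
    (c x : EuclideanSpace ℝ (Fin n)) : ⟪c, R x⟫ = ⟪R.symm c, x⟫ := by
  conv_lhs => rw [← R.apply_symm_apply c]
  exact R.inner_map_map _ _

lemma trans_isGreatest {A : Set (EuclideanSpace ℝ (Fin n))}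
    (R : EuclideanSpace ℝ (Fin n) ≃ₗᵢ[ℝ] EuclideanSpace ℝ (Fin n))
    (p c : EuclideanSpace ℝ (Fin n)) {m : ℝ}
    (h : IsGreatest ((fun x => ⟪R.symm c, x⟫) '' A) m) :
    IsGreatest ((fun x => ⟪c, x⟫) '' ((fun x => R x + p) '' A)) (m + ⟪c, p⟫) := by
  have hkey : ∀ x : EuclideanSpace ℝ (Fin n), ⟪c, R x + p⟫ = ⟪R.symm c, x⟫ + ⟪c, p⟫ := by
    intro x; rw [inner_add_right, inner_isom]
  obtain ⟨⟨xm, hxm, hxv⟩, hub⟩ := h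
  constructor
  · refine ⟨R xm + p, ⟨xm, hxm, rfl⟩, ?_⟩
    show ⟪c, R xm + p⟫ = m + ⟪c, p⟫
    rw [hkey]
    exact congrArg (· + ⟪c, p⟫) hxv
  · rintro r ⟨z, ⟨x, hx, rfl⟩, rfl⟩
    have h2 : ⟪R.symm c, x⟫ ≤ m := hub ⟨x, hx, rfl⟩
    show ⟪c, R x + p⟫ ≤ m + ⟪c, p⟫
    rw [hkey]
    linarith

lemma trans_isLeast {A : Set (EuclideanSpace ℝ (Fin n))}
    (R : EuclideanSpace ℝ (Fin n) ≃ₗᵢ[ℝ] EuclideanSpace ℝ (Fin n))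
    (p c : EuclideanSpace ℝ (Fin n)) {m : ℝ}
    (h : IsLeast ((fun x => ⟪R.symm c, x⟫) '' A) m) :
    IsLeast ((fun x => ⟪c, x⟫) '' ((fun x => R x + p) '' A)) (m + ⟪c, p⟫) := by
  have hkey : ∀ x : EuclideanSpace ℝ (Fin n), ⟪c, R x + p⟫ = ⟪R.symm c, x⟫ + ⟪c, p⟫ := by
    intro x; rw [inner_add_right, inner_isom]
  obtain ⟨⟨xm, hxm, hxv⟩, hlb⟩ := h
  constructor
  · refine ⟨R xm + p, ⟨xm, hxm, rfl⟩, ?_⟩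
    show ⟪c, R xm + p⟫ = m + ⟪c, p⟫
    rw [hkey]
    exact congrArg (· + ⟪c, p⟫) hxv
  · rintro r ⟨z, ⟨x, hx, rfl⟩, rfl⟩
    have h2 : m ≤ ⟪R.symm c, x⟫ := hlb ⟨x, hx, rfl⟩
    show m + ⟪c, p⟫ ≤ ⟪c, R x + p⟫
    rw [hkey]
    linarith

lemma trans_compact {A : Set (EuclideanSpace ℝ (Fin n))} (hA : IsCompact A)
    (R : EuclideanSpace ℝ (Fin n) ≃ₗᵢ[ℝ] EuclideanSpace ℝ (Fin n))
    (p : EuclideanSpace ℝ (Fin n)) : IsCompact ((fun x => R x + p) '' A) :=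
  hA.image (R.continuous.add continuous_const)

lemma trans_convex {A : Set (EuclideanSpace ℝ (Fin n))} (hA : Convex ℝ A)
    (R : EuclideanSpace ℝ (Fin n) ≃ₗᵢ[ℝ] EuclideanSpace ℝ (Fin n))
    (p : EuclideanSpace ℝ (Fin n)) : Convex ℝ ((fun x => R x + p) '' A) := by
  have h1 : ((fun x => R x + p) '' A)
      = (fun y => p + y) '' ((R.toLinearEquiv : EuclideanSpace ℝ (Fin n) →ₗ[ℝ] EuclideanSpace ℝ (Fin n)) '' A) := by
    rw [Set.image_image]
    exact Set.image_congr fun x _ => by simp [add_comm]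
  rw [h1]
  exact (hA.linear_image _).translate p


theorem sd_ge_iff_abstract {C D : Set (EuclideanSpace ℝ (Fin n))} (hn : 0 < n)
    (hC : IsCompact C) (hCcv : Convex ℝ C) (hCne : C.Nonempty)
    (hD : IsCompact D) (hDcv : Convex ℝ D) (hDne : D.Nonempty) (γ : ℝ) :
    sd C D ≥ γ ↔ ∃ c : EuclideanSpace ℝ (Fin n), ‖c‖ = 1 ∧ γ ≤ costFn C c - suppFn D c := by
  constructor
  · intro h
    obtain ⟨c, hc1, hc2⟩ := exists_opt hn hC hCcv hCne hD hDcv hDne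
    exact ⟨c, hc1, le_trans h hc2⟩
  · rintro ⟨c, hc1, hc2⟩
    exact le_trans hc2 (sd_ge_single hC hCne hD hDne hc1)

end Aux2
end Aux

theorem sd_ge_iff_ellipsoid_certificate {n : ℕ} (hn : 0 < n)
    (P Q : Matrix (Fin n) (Fin n) ℝ) (hP : P.PosDef) (hQ : Q.PosDef)
    (R S : EuclideanSpace ℝ (Fin n) ≃ₗᵢ[ℝ] EuclideanSpace ℝ (Fin n)) (p d : EuclideanSpace ℝ (Fin n)) (γ : ℝ) :
    sd ((fun x => R x + p) '' {x : EuclideanSpace ℝ (Fin n) | ⟪x, Matrix.toEuclideanLin P⁻¹ x⟫ ≤ 1})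
       ((fun x => S x + d) '' {x : EuclideanSpace ℝ (Fin n) | ⟪x, Matrix.toEuclideanLin Q⁻¹ x⟫ ≤ 1}) ≥ γ ↔
      ∃ c : EuclideanSpace ℝ (Fin n), ‖c‖ = 1 ∧
        γ ≤ - Real.sqrt ⟪c, R (Matrix.toEuclideanLin P (R.symm c))⟫
            - Real.sqrt ⟪c, S (Matrix.toEuclideanLin Q (S.symm c))⟫
            + ⟪c, p - d⟫ := by
  have hCco := trans_compact (ell_compact hP) R p
  have hCcv := trans_convex (ell_convex hP) R p
  have hCne : ((fun x => R x + p) '' {x : EuclideanSpace ℝ (Fin n) | ⟪x, Matrix.toEuclideanLin P⁻¹ x⟫ ≤ 1}).Nonempty :=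
    (Set.nonempty_of_mem (ell_zero_mem hP)).image _
  have hDco := trans_compact (ell_compact hQ) S d
  have hDcv := trans_convex (ell_convex hQ) S d
  have hDne : ((fun x => S x + d) '' {x : EuclideanSpace ℝ (Fin n) | ⟪x, Matrix.toEuclideanLin Q⁻¹ x⟫ ≤ 1}).Nonempty :=
    (Set.nonempty_of_mem (ell_zero_mem hQ)).image _
  rw [sd_ge_iff_abstract hn hCco hCcv hCne hDco hDcv hDne γ]
  refine exists_congr fun c => and_congr_right fun _ => ?_
  have h1 : costFn ((fun x => R x + p) '' {x : EuclideanSpace ℝ (Fin n) | ⟪x, Matrix.toEuclideanLin P⁻¹ x⟫ ≤ 1}) c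
      = - Real.sqrt ⟪R.symm c, Matrix.toEuclideanLin P (R.symm c)⟫ + ⟪c, p⟫ :=
    (trans_isLeast R p c (ell_isLeast hP (R.symm c))).csInf_eq
  have h2 : suppFn ((fun x => S x + d) '' {x : EuclideanSpace ℝ (Fin n) | ⟪x, Matrix.toEuclideanLin Q⁻¹ x⟫ ≤ 1}) c
      = Real.sqrt ⟪S.symm c, Matrix.toEuclideanLin Q (S.symm c)⟫ + ⟪c, d⟫ :=
    (trans_isGreatest S d c (ell_isGreatest hQ (S.symm c))).csSup_eq
  have h3 : ⟪R.symm c, Matrix.toEuclideanLin P (R.symm c)⟫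
      = ⟪c, R (Matrix.toEuclideanLin P (R.symm c))⟫ := (inner_isom R c _).symm
  have h4 : ⟪S.symm c, Matrix.toEuclideanLin Q (S.symm c)⟫
      = ⟪c, S (Matrix.toEuclideanLin Q (S.symm c))⟫ := (inner_isom S c _).symm
  rw [h1, h2, h3, h4, inner_sub_right]
  constructor <;> intro h <;> linarith
end

section
/- For nonempty compact convex C, D ⊆ ℝⁿ, the signed distance equals the supremum over unit vectors of the separation margin: sd(C, D) = sup{μ_C(c) − σ_D(c) : c ∈ ℝⁿ, ‖c‖ = 1}, and this supremum is attained. -/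
open scoped RealInnerProductSpace Pointwise

section Aux

variable {n : ℕ}

local notation "E" => EuclideanSpace ℝ (Fin n)

private lemma inner_cont (c : E) : Continuous fun x : E => ⟪c, x⟫ :=
  continuous_const.inner continuous_id

/-- The margin is at most the inner product gap for any chosen points. -/
private lemma g_le {C D : Set E} (hCc : IsCompact C) (hDc : IsCompact D)
    (c : E) {x y : E} (hx : x ∈ C) (hy : y ∈ D) :
    costFn C c - suppFn D c ≤ ⟪c, x⟫ - ⟪c, y⟫ := by
  have h1 : costFn C c ≤ ⟪c, x⟫ :=
    csInf_le (hCc.image (inner_cont c)).bddBelow (Set.mem_image_of_mem _ hx)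
  have h2 : ⟪c, y⟫ ≤ suppFn D c :=
    le_csSup (hDc.image (inner_cont c)).bddAbove (Set.mem_image_of_mem _ hy)
  linarith

private lemma le_g {C D : Set E} (hD : D.Nonempty) (hCc : IsCompact C) (hDc : IsCompact D)
    (c : E) {a : ℝ} (h : ∀ x ∈ C, ∀ y ∈ D, a ≤ ⟪c, x⟫ - ⟪c, y⟫) (hC : C.Nonempty) :
    a ≤ costFn C c - suppFn D c := by
  have hmem : suppFn D c ∈ (fun x => ⟪c, x⟫) '' D :=
    (hDc.image (inner_cont c)).sSup_mem (hD.image _)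
  obtain ⟨y₁, hy₁, hy₁'⟩ := hmem
  have h3 : a + suppFn D c ≤ costFn C c := by
    apply le_csInf (hC.image _)
    rintro b ⟨x, hx, rfl⟩
    have hxy := h x hx y₁ hy₁
    have hy2 : ⟪c, y₁⟫ = suppFn D c := hy₁'
    show a + suppFn D c ≤ ⟪c, x⟫
    linarith
  linarith

/-- Nearest point on a compact convex set, with the obtuse-angle property. -/
private lemma exists_proj {K : Set E} (hKc : IsCompact K) (hKv : Convex ℝ K)
    (hK : K.Nonempty) (q : E) :
    ∃ z ∈ K, (∀ w ∈ K, ‖q - z‖ ≤ ‖q - w‖) ∧ ∀ w ∈ K, ⟪q - z, w - z⟫ ≤ 0 := by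
  have hcont : Continuous fun w : E => ‖q - w‖ := (continuous_const.sub continuous_id).norm
  obtain ⟨z, hz, hmin⟩ := hKc.exists_isMinOn hK hcont.continuousOn
  have hmin' : ∀ w ∈ K, ‖q - z‖ ≤ ‖q - w‖ := fun w hw => isMinOn_iff.mp hmin w hw
  refine ⟨z, hz, hmin', ?_⟩
  haveI : Nonempty K := hK.to_subtype
  have heq : ‖q - z‖ = ⨅ w : K, ‖q - w‖ := by
    apply le_antisymm
    · exact le_ciInf fun w => hmin' w w.2
    · have hbdd : BddBelow (Set.range fun w : K => ‖q - (w : E)‖) :=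
        ⟨0, by rintro _ ⟨w, rfl⟩; exact norm_nonneg _⟩
      exact ciInf_le hbdd ⟨z, hz⟩
  exact (norm_eq_iInf_iff_real_inner_le_zero hKv hz).mp heq

private lemma lip_cost {C : Set E} (hC : C.Nonempty) (hCc : IsCompact C) {M : ℝ}
    (hM : ∀ x ∈ C, ‖x‖ ≤ M) (c c' : E) :
    costFn C c ≤ costFn C c' + M * ‖c - c'‖ := by
  have hmem : costFn C c' ∈ (fun x => ⟪c', x⟫) '' C :=
    (hCc.image (inner_cont c')).sInf_mem (hC.image _)
  obtain ⟨x', hx', hx''⟩ := hmem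
  have h1 : costFn C c ≤ ⟪c, x'⟫ :=
    csInf_le (hCc.image (inner_cont c)).bddBelow (Set.mem_image_of_mem _ hx')
  have h2 : ⟪c, x'⟫ = ⟪c', x'⟫ + ⟪c - c', x'⟫ := by rw [inner_sub_left]; ring
  have h3 : ⟪c - c', x'⟫ ≤ ‖c - c'‖ * ‖x'‖ := real_inner_le_norm _ _
  have h4 : ‖c - c'‖ * ‖x'‖ ≤ M * ‖c - c'‖ := by
    rw [mul_comm]
    exact mul_le_mul_of_nonneg_right (hM x' hx') (norm_nonneg _)
  have hx2 : ⟪c', x'⟫ = costFn C c' := hx''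
  linarith

private lemma lip_supp {D : Set E} (hD : D.Nonempty) (hDc : IsCompact D) {M : ℝ}
    (hM : ∀ x ∈ D, ‖x‖ ≤ M) (c c' : E) :
    suppFn D c ≤ suppFn D c' + M * ‖c - c'‖ := by
  have hmem : suppFn D c ∈ (fun x => ⟪c, x⟫) '' D :=
    (hDc.image (inner_cont c)).sSup_mem (hD.image _)
  obtain ⟨y', hy', hy''⟩ := hmem
  have h1 : ⟪c', y'⟫ ≤ suppFn D c' :=
    le_csSup (hDc.image (inner_cont c')).bddAbove (Set.mem_image_of_mem _ hy')
  have h2 : ⟪c, y'⟫ = ⟪c', y'⟫ + ⟪c - c', y'⟫ := by rw [inner_sub_left]; ring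
  have h3 : ⟪c - c', y'⟫ ≤ ‖c - c'‖ * ‖y'‖ := real_inner_le_norm _ _
  have h4 : ‖c - c'‖ * ‖y'‖ ≤ M * ‖c - c'‖ := by
    rw [mul_comm]
    exact mul_le_mul_of_nonneg_right (hM y' hy') (norm_nonneg _)
  have hy2 : ⟪c, y'⟫ = suppFn D c := hy''
  linarith

private lemma g_continuous {C D : Set E} (hC : C.Nonempty) (hD : D.Nonempty)
    (hCc : IsCompact C) (hDc : IsCompact D) :
    Continuous fun c : E => costFn C c - suppFn D c := by
  obtain ⟨M₁, hM₁⟩ := hCc.isBounded.exists_norm_le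
  obtain ⟨M₂, hM₂⟩ := hDc.isBounded.exists_norm_le
  set L : ℝ := M₁ + M₂ with hL
  have hM₁0 : 0 ≤ M₁ := le_trans (norm_nonneg _) (hM₁ hC.some hC.some_mem)
  have hM₂0 : 0 ≤ M₂ := le_trans (norm_nonneg _) (hM₂ hD.some hD.some_mem)
  have key : ∀ c c' : E, dist (costFn C c - suppFn D c) (costFn C c' - suppFn D c')
      ≤ L.toNNReal * dist c c' := by
    intro c c'
    have e1 := lip_cost hC hCc hM₁ c c'
    have e2 := lip_cost hC hCc hM₁ c' c
    have e3 := lip_supp hD hDc hM₂ c c'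
    have e4 := lip_supp hD hDc hM₂ c' c
    rw [norm_sub_rev c' c] at e2 e4
    have hLnn : (L.toNNReal : ℝ) = L := Real.coe_toNNReal _ (by linarith)
    rw [Real.dist_eq, abs_sub_le_iff, dist_eq_norm, hLnn]
    constructor <;> nlinarith [norm_nonneg (c - c')]
  exact (LipschitzWith.of_dist_le_mul key).continuous

end Aux

theorem sd_eq_sup_margin {n : ℕ} (hn : 0 < n) (C D : Set (EuclideanSpace ℝ (Fin n)))
    (hC : C.Nonempty) (hD : D.Nonempty) (hCc : IsCompact C) (hDc : IsCompact D)
    (hCv : Convex ℝ C) (hDv : Convex ℝ D) :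
    IsGreatest {r : ℝ | ∃ c : EuclideanSpace ℝ (Fin n), ‖c‖ = 1 ∧ r = costFn C c - suppFn D c} (sd C D) := by
  classical
  set K : Set (EuclideanSpace ℝ (Fin n)) := C - D with hKdef
  have hKc : IsCompact K := by
    rw [hKdef, ← Set.sub_image_prod]
    exact (hCc.prod hDc).image (continuous_fst.sub continuous_snd)
  have hKv : Convex ℝ K := hCv.sub hDv
  have hKne : K.Nonempty := hC.sub hD
  by_cases hdis : Disjoint C D
  · -- disjoint case
    obtain ⟨z, hzK, hzmin, hzproj⟩ := exists_proj hKc hKv hKne 0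
    have hz0 : z ≠ 0 := by
      rintro rfl
      obtain ⟨x, hx, y, hy, hxy⟩ := Set.mem_sub.mp hzK
      have : x = y := by rwa [sub_eq_zero] at hxy
      exact hdis.ne_of_mem hx hy this
    have hznorm : 0 < ‖z‖ := norm_pos_iff.mpr hz0
    -- sd C D = ‖z‖
    have hsd : sd C D = ‖z‖ := by
      rw [sd, if_pos hdis]
      apply IsLeast.csInf_eq
      constructor
      · obtain ⟨x, hx, y, hy, hxy⟩ := Set.mem_sub.mp hzK
        exact ⟨x, hx, y, hy, by rw [hxy]⟩
      · rintro r ⟨x, hx, y, hy, rfl⟩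
        have := hzmin (x - y) (Set.sub_mem_sub hx hy)
        simpa [norm_sub_rev] using this
    set c := ‖z‖⁻¹ • z with hc
    have hcnorm : ‖c‖ = 1 := by
      rw [hc, norm_smul, norm_inv, norm_norm, inv_mul_cancel₀ (ne_of_gt hznorm)]
    have hinner : ∀ w ∈ K, ‖z‖ ≤ ⟪c, w⟫ := by
      intro w hw
      have h := hzproj w hw
      have h2 : ‖z‖ ^ 2 ≤ ⟪z, w⟫ := by
        have he : ⟪(0 : EuclideanSpace ℝ (Fin n)) - z, w - z⟫ = -⟪z, w⟫ + ‖z‖ ^ 2 := by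
          rw [zero_sub, inner_sub_right, inner_neg_left, inner_neg_left,
            real_inner_self_eq_norm_sq]
          ring
        rw [he] at h; linarith
      have h5 : ⟪c, w⟫ = ‖z‖⁻¹ * ⟪z, w⟫ := real_inner_smul_left _ _ _
      rw [h5]
      have h6 : ‖z‖⁻¹ * ‖z‖ ^ 2 ≤ ‖z‖⁻¹ * ⟪z, w⟫ :=
        mul_le_mul_of_nonneg_left h2 (by positivity)
      have h7 : ‖z‖⁻¹ * ‖z‖ ^ 2 = ‖z‖ := by
        field_simp
      linarith
    constructor
    · refine ⟨c, hcnorm, ?_⟩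
      have hle : costFn C c - suppFn D c ≤ ‖z‖ := by
        obtain ⟨x, hx, y, hy, hxy⟩ := Set.mem_sub.mp hzK
        have h1 := g_le hCc hDc c hx hy
        have h2 : ⟪c, x⟫ - ⟪c, y⟫ = ⟪c, z⟫ := by rw [← hxy, inner_sub_right]
        have h3 : ⟪c, z⟫ = ‖z‖ := by
          rw [hc, real_inner_smul_left, real_inner_self_eq_norm_sq]
          field_simp
        linarith
      have hge : ‖z‖ ≤ costFn C c - suppFn D c := by
        apply le_g hD hCc hDc c _ hC
        intro x hx y hy
        have := hinner (x - y) (Set.sub_mem_sub hx hy)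
        rwa [inner_sub_right] at this
      rw [hsd]
      linarith
    · rintro r ⟨c', hc', rfl⟩
      obtain ⟨x, hx, y, hy, hxy⟩ := Set.mem_sub.mp hzK
      have h1 := g_le hCc hDc c' hx hy
      have h2 : ⟪c', x⟫ - ⟪c', y⟫ = ⟪c', z⟫ := by rw [← hxy, inner_sub_right]
      have h3 : ⟪c', z⟫ ≤ ‖c'‖ * ‖z‖ := real_inner_le_norm _ _
      rw [hc'] at h3
      rw [hsd]
      linarith
  · -- non-disjoint case
    obtain ⟨p, hpC, hpD⟩ := Set.not_disjoint_iff.mp hdis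
    have h0K : (0 : EuclideanSpace ℝ (Fin n)) ∈ K := by
      rw [hKdef, Set.mem_sub]
      exact ⟨p, hpC, p, hpD, sub_self p⟩
    set R : Set ℝ := {r | ∃ t : EuclideanSpace ℝ (Fin n), ‖t‖ = r ∧ Disjoint ((· + t) '' C) D} with hR
    have hdisj_iff : ∀ t : EuclideanSpace ℝ (Fin n), Disjoint ((· + t) '' C) D ↔ -t ∉ K := by
      intro t
      rw [Set.disjoint_left]
      constructor
      · intro h hmem
        obtain ⟨x, hx, y, hy, hxy⟩ := Set.mem_sub.mp hmem
        exact h (Set.mem_image_of_mem _ hx) (show x + t ∈ D by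
          have h' : x + t = y := by
            rw [← sub_eq_zero, show x + t - y = (x - y) - -t by abel, hxy, sub_self]
          rw [h']; exact hy)
      · rintro h a ⟨x, hx, rfl⟩ haD
        exact h (Set.mem_sub.mpr ⟨x, hx, x + t, haD, by abel⟩)
    have hRalt : R = {r | ∃ s : EuclideanSpace ℝ (Fin n), ‖s‖ = r ∧ s ∉ K} := by
      ext r
      constructor
      · rintro ⟨t, ht, hdt⟩
        exact ⟨-t, by rw [norm_neg, ht], (hdisj_iff t).mp hdt⟩
      · rintro ⟨s, hs, hsK⟩
        refine ⟨-s, by rw [norm_neg, hs], (hdisj_iff (-s)).mpr (by rwa [neg_neg])⟩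
    -- K^c nonempty: take a point of large norm
    obtain ⟨M, hM⟩ := hKc.isBounded.exists_norm_le
    have hRne : R.Nonempty := by
      rw [hRalt]
      haveI : Nonempty (Fin n) := ⟨⟨0, hn⟩⟩
      set e₀ : EuclideanSpace ℝ (Fin n) := EuclideanSpace.single ⟨0, hn⟩ (1 : ℝ) with he₀
      have he₀n : ‖e₀‖ = 1 := by simp [he₀]
      refine ⟨‖(M + 1) • e₀‖, (M + 1) • e₀, rfl, fun hmem => ?_⟩
      have h1 := hM _ hmem
      have h2 : ‖(M + 1) • e₀‖ = |M + 1| := by rw [norm_smul, he₀n, mul_one, Real.norm_eq_abs]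
      have hM0 : 0 ≤ M := le_trans (norm_nonneg _) (hM 0 h0K)
      rw [h2, abs_of_nonneg (by linarith)] at h1
      linarith
    have hRlb : ∀ r ∈ R, 0 ≤ r := by
      rw [hRalt]; rintro r ⟨s, rfl, _⟩; exact norm_nonneg _
    set d : ℝ := sInf R with hd
    have hd0 : 0 ≤ d := le_csInf hRne hRlb
    have hsd : sd C D = -d := by rw [sd, if_neg hdis]
    -- small vectors are in K
    have hsmall : ∀ s : EuclideanSpace ℝ (Fin n), ‖s‖ < d → s ∈ K := by
      intro s hs
      by_contra hsK
      have : d ≤ ‖s‖ := csInf_le ⟨0, hRlb⟩ (by rw [hRalt]; exact ⟨s, rfl, hsK⟩)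
      linarith
    -- upper bound: every margin is ≤ -d
    have hub : ∀ c : EuclideanSpace ℝ (Fin n), ‖c‖ = 1 → costFn C c - suppFn D c ≤ -d := by
      intro c hc
      have hkey : ∀ t : ℝ, t < d → costFn C c - suppFn D c ≤ -t := by
        intro t ht
        rcases le_or_gt 0 t with ht0 | ht0
        · have hmem : (-t) • c ∈ K := by
            apply hsmall
            rw [norm_smul, hc, mul_one, Real.norm_eq_abs, abs_neg, abs_of_nonneg ht0]
            exact ht
          obtain ⟨x, hx, y, hy, hxy⟩ := Set.mem_sub.mp hmem
          have h1 := g_le hCc hDc c hx hy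
          have h2 : ⟪c, x⟫ - ⟪c, y⟫ = -t := by
            rw [← inner_sub_right, hxy, real_inner_smul_right, real_inner_self_eq_norm_sq,
              hc]
            ring
          linarith
        · obtain ⟨x, hx, y, hy, hxy⟩ := Set.mem_sub.mp h0K
          have h1 := g_le hCc hDc c hx hy
          have h2 : ⟪c, x⟫ - ⟪c, y⟫ = 0 := by
            rw [← inner_sub_right, hxy, inner_zero_right]
          linarith
      by_contra hcon
      push_neg at hcon
      have h2 := hkey ((-(costFn C c - suppFn D c) + d) / 2) (by linarith)
      linarith
    -- the margin function attains a max on the sphere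
    haveI : Nonempty (Fin n) := ⟨⟨0, hn⟩⟩
    have hsphne : (Metric.sphere (0 : EuclideanSpace ℝ (Fin n)) 1).Nonempty := by
      refine ⟨EuclideanSpace.single ⟨0, hn⟩ (1 : ℝ), ?_⟩
      simp [EuclideanSpace.norm_single]
    obtain ⟨c₀, hc₀mem, hc₀max⟩ := (isCompact_sphere (0 : EuclideanSpace ℝ (Fin n)) 1).exists_isMaxOn hsphne
      ((g_continuous hC hD hCc hDc).continuousOn)
    have hc₀n : ‖c₀‖ = 1 := by simpa using hc₀mem
    -- approximation: for every ε > 0 there is a unit c with margin ≥ -(d + ε)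
    have happrox : ∀ ε : ℝ, 0 < ε → -(d + ε) ≤ costFn C c₀ - suppFn D c₀ := by
      intro ε hε
      obtain ⟨r, hrR, hrlt⟩ := Real.lt_sInf_add_pos hRne hε
      rw [hRalt] at hrR
      obtain ⟨q, rfl, hqK⟩ := hrR
      obtain ⟨z, hzK, _, hzproj⟩ := exists_proj hKc hKv hKne q
      have hqz : q - z ≠ 0 := by
        intro h
        rw [sub_eq_zero] at h
        exact hqK (h ▸ hzK)
      set u := q - z with hu
      have hun : 0 < ‖u‖ := norm_pos_iff.mpr hqz
      set c := -(‖u‖⁻¹ • u) with hc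
      have hcn : ‖c‖ = 1 := by
        rw [hc, norm_neg, norm_smul, norm_inv, norm_norm, inv_mul_cancel₀ (ne_of_gt hun)]
      have hlow : ∀ w ∈ K, -‖q‖ ≤ ⟪c, w⟫ := by
        intro w hw
        have h := hzproj w hw
        -- ⟪u, w - z⟫ ≤ 0, so ⟪u, w⟫ ≤ ⟪u, z⟫ = ⟪u, q⟫ - ‖u‖²
        have h1 : ⟪u, w⟫ ≤ ⟪u, z⟫ := by
          rw [inner_sub_right] at h; linarith
        have h2 : ⟪u, z⟫ = ⟪u, q⟫ - ‖u‖ ^ 2 := by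
          have : ⟪u, q - z⟫ = ⟪u, q⟫ - ⟪u, z⟫ := inner_sub_right _ _ _
          rw [← hu] at this
          rw [real_inner_self_eq_norm_sq] at this
          linarith
        have h3 : ⟪u, q⟫ ≤ ‖u‖ * ‖q‖ := real_inner_le_norm _ _
        have h4 : ⟪u, w⟫ ≤ ‖u‖ * ‖q‖ := by nlinarith [sq_nonneg ‖u‖, hun]
        have h5 : ⟪c, w⟫ = -(‖u‖⁻¹ * ⟪u, w⟫) := by
          rw [hc, inner_neg_left, real_inner_smul_left]
        rw [h5]
        have h6 : ‖u‖⁻¹ * ⟪u, w⟫ ≤ ‖u‖⁻¹ * (‖u‖ * ‖q‖) :=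
          mul_le_mul_of_nonneg_left h4 (by positivity)
        have h7 : ‖u‖⁻¹ * (‖u‖ * ‖q‖) = ‖q‖ := by field_simp
        linarith
      have hgc : -‖q‖ ≤ costFn C c - suppFn D c := by
        apply le_g hD hCc hDc c _ hC
        intro x hx y hy
        have := hlow (x - y) (Set.sub_mem_sub hx hy)
        rwa [inner_sub_right] at this
      have hcmem : c ∈ Metric.sphere (0 : EuclideanSpace ℝ (Fin n)) 1 := by simpa using hcn
      have h8 : costFn C c - suppFn D c ≤ costFn C c₀ - suppFn D c₀ := hc₀max hcmem
      have hq : ‖q‖ ≤ d + ε := le_of_lt hrlt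
      linarith
    have hge : -d ≤ costFn C c₀ - suppFn D c₀ := by
      by_contra hcon
      push_neg at hcon
      have := happrox ((-(costFn C c₀ - suppFn D c₀) - d) / 2) (by linarith)
      linarith
    have heq : costFn C c₀ - suppFn D c₀ = -d := le_antisymm (hub c₀ hc₀n) hge
    constructor
    · exact ⟨c₀, hc₀n, by rw [hsd, heq]⟩
    · rintro r ⟨c', hc', rfl⟩
      rw [hsd]
      exact hub c' hc'
end
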